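/- Let E be a finite-dimensional real inner product space, let g, h : E → ℝ be differentiable with h convex, and let x₀ ∈ E. If x₁ is a global minimizer over E of the function x ↦ g(x) - ⟪∇h(x₀), x - x₀⟫, then g(x₁) - h(x₁) ≤ g(x₀) - h(x₀); that is, the DCA step does not increase the objective f = g - h. -/

import Mathlib

open RealInnerProductSpace

/-- The DCA step does not increase the objective `f = g - h`. -/
theorem dca_step_decreases
    {E : Type*} [NormedAddCommGroup E] [InnerProductSpace ℝ E] [FiniteDimensional ℝ E]
    (g h : E → ℝ) (hg : Differentiable ℝ g) (hh : Differentiable ℝ h)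
    (hconv : ConvexOn ℝ Set.univ h) (x₀ x₁ : E)
    (hmin : ∀ x : E,
      g x₁ - ⟪gradient h x₀, x₁ - x₀⟫ ≤ g x - ⟪gradient h x₀, x - x₀⟫) :
    g x₁ - h x₁ ≤ g x₀ - h x₀ := by
  set v := x₁ - x₀ with hv
  set φ : ℝ → ℝ := fun t => h (x₀ + t • v) with hφ
  have hφconv : ConvexOn ℝ Set.univ φ := by
    have := hconv.comp_affineMap (AffineMap.lineMap x₀ x₁ : ℝ →ᵃ[ℝ] E)
    have hfun : φ = h ∘ (AffineMap.lineMap x₀ x₁ : ℝ →ᵃ[ℝ] E) := by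
      funext t
      simp [hφ, hv, AffineMap.lineMap_apply, add_comm]
    rw [hfun]
    simpa using this
  have hgrad : HasGradientAt h (gradient h x₀) x₀ := (hh x₀).hasGradientAt
  have hfd : HasFDerivAt h ((InnerProductSpace.toDual ℝ E) (gradient h x₀)) x₀ :=
    hasGradientAt_iff_hasFDerivAt.mp hgrad
  have hline : HasDerivAt (fun t : ℝ => x₀ + t • v) v 0 := by
    simpa using ((hasDerivAt_id (0:ℝ)).smul_const v).const_add x₀
  have hφderiv : HasDerivAt φ ⟪gradient h x₀, v⟫ 0 := by
    have hfd' : HasFDerivAt h ((InnerProductSpace.toDual ℝ E) (gradient h x₀)) (x₀ + (0:ℝ) • v) := by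
      simpa using hfd
    have := hfd'.comp_hasDerivAt 0 hline
    exact this
  have hslope := hφconv.le_slope_of_hasDerivAt (Set.mem_univ 0) (Set.mem_univ 1)
    one_pos hφderiv
  have h1 : φ 1 = h x₁ := by simp [hφ, hv]
  have h0 : φ 0 = h x₀ := by simp [hφ]
  rw [slope_def_field] at hslope
  simp only [h1, h0, div_one, sub_zero] at hslope
  have hmin0 := hmin x₀
  simp only [sub_self, inner_zero_right] at hmin0
  linarith
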